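/- arXiv:2307.12923 — 5 statements merged into one kernel-verified Lean document; each statement's English description precedes it below -/
import Mathlib

section
/- Let σ, ρ be real numbers with 0 < σ < ρ < 1, and let M > 0 be arbitrary. Then there exists a function π : ℝ → ℝ in the class S (i.e., π is odd, differentiable with π'(x) > 0 for all x ∈ (−1,1), π is concave on [0,1], and π(x) = 1 for all x ≥ 1) such that, setting u = π⁻¹(ρ) and v = π⁻¹(σ) (well defined since π is a strictly increasing continuous bijection from [−1,1] onto [−1,1]), one has π'(v)/π'(u) ≥ M. -/
lemma my_hasDerivAt_tanh (x : ℝ) : HasDerivAt Real.tanh (1 / Real.cosh x ^ 2) x := by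
  have h : Real.tanh = fun y => Real.sinh y / Real.cosh y :=
    funext fun y => Real.tanh_eq_sinh_div_cosh y
  have hd := (Real.hasDerivAt_sinh x).div (Real.hasDerivAt_cosh x) (Real.cosh_pos x).ne'
  rw [h]
  convert hd using 1
  · rfl
  · rfl
  · rfl
  have h1 := Real.cosh_sq_sub_sinh_sq x
  rw [← h1]; ring

lemma my_one_div_cosh_sq (x : ℝ) : 1 / Real.cosh x ^ 2 = 1 - Real.tanh x ^ 2 := by
  have h1 := Real.cosh_sq_sub_sinh_sq x
  have hc := (Real.cosh_pos x).ne'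
  rw [Real.tanh_eq_sinh_div_cosh]
  field_simp
  linarith

lemma my_tanh_lt_one (x : ℝ) : Real.tanh x < 1 := by
  rw [Real.tanh_eq_sinh_div_cosh, div_lt_one (Real.cosh_pos x)]
  nlinarith [Real.cosh_sub_sinh x, Real.exp_pos (-x)]

lemma my_tanh_nonneg {x : ℝ} (hx : 0 ≤ x) : 0 ≤ Real.tanh x := by
  rw [Real.tanh_eq_sinh_div_cosh]
  exact div_nonneg (Real.sinh_nonneg_iff.2 hx) (Real.cosh_pos x).le

lemma my_half_exp_le_cosh (x : ℝ) : Real.exp x / 2 ≤ Real.cosh x := by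
  rw [Real.cosh_eq]
  nlinarith [Real.exp_pos (-x)]

set_option maxHeartbeats 2000000 in
/-- For `0 < σ < ρ < 1` and any `M > 0`, there is a switching function `π` in the
class `S` (odd, with positive derivative on `(−1,1)`, concave on `[0,1]`, and equal
to `1` on `[1,∞)`) such that, with `u = π⁻¹(ρ)` and `v = π⁻¹(σ)`, the ratio
`π'(v)/π'(u)` is at least `M`. -/
theorem exists_switching_function_with_large_derivative_ratio
    (σ ρ M : ℝ) (hσ : 0 < σ) (hσρ : σ < ρ) (hρ : ρ < 1) (hM : 0 < M) :
    ∃ π : ℝ → ℝ,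
      (∀ x : ℝ, π (-x) = -π x) ∧
      (∀ x ∈ Set.Ioo (-1 : ℝ) 1, DifferentiableAt ℝ π x) ∧
      (∀ x ∈ Set.Ioo (-1 : ℝ) 1, 0 < deriv π x) ∧
      ConcaveOn ℝ (Set.Icc (0 : ℝ) 1) π ∧
      (∀ x : ℝ, 1 ≤ x → π x = 1) ∧
      ∃ u v : ℝ, u ∈ Set.Ioo (-1 : ℝ) 1 ∧ v ∈ Set.Ioo (-1 : ℝ) 1 ∧
        π u = ρ ∧ π v = σ ∧ M ≤ deriv π v / deriv π u := by
  -- constants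
  obtain ⟨A, hAdef⟩ : ∃ A : ℝ, A = (σ + ρ) / 2 := ⟨_, rfl⟩
  have hA0 : 0 < A := by simp only [hAdef]; linarith
  have hAσ : σ < A := by simp only [hAdef]; linarith
  have hAρ : A < ρ := by simp only [hAdef]; linarith
  have hA1 : A < 1 := by linarith
  obtain ⟨δ, hδdef⟩ : ∃ δ : ℝ, δ = ρ - A := ⟨_, rfl⟩
  have hδ0 : 0 < δ := by simp only [hδdef]; linarith
  obtain ⟨c, hcdef⟩ : ∃ c : ℝ, c = (A ^ 2 - σ ^ 2) / A := ⟨_, rfl⟩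
  have hc0 : 0 < c := by
    rw [hcdef]; apply div_pos _ hA0; nlinarith
  obtain ⟨n, hndef⟩ : ∃ n : ℝ, n = max 1 (max (2 * M / c) (4 * A / δ ^ 2)) := ⟨_, rfl⟩
  have hn1 : 1 ≤ n := hndef ▸ le_max_left _ _
  have hn0 : 0 < n := lt_of_lt_of_le one_pos hn1
  have hnM : 2 * M ≤ n * c := by
    have : 2 * M / c ≤ n := hndef ▸ le_trans (le_max_left _ _) (le_max_right _ _)
    calc 2 * M = (2 * M / c) * c := by field_simp
    _ ≤ n * c := by nlinarith
  have hnδ : 4 * A / δ ^ 2 ≤ n := hndef ▸ le_trans (le_max_right _ _) (le_max_right _ _)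
  obtain ⟨B, hBdef⟩ : ∃ B : ℝ, B = 1 - A * Real.tanh n := ⟨_, rfl⟩
  have hB0 : 0 < B := by
    have h1 : Real.tanh n < 1 := my_tanh_lt_one n
    have h2 : 0 ≤ Real.tanh n := my_tanh_nonneg hn0.le
    simp only [hBdef]; nlinarith
  have hB1 : B ≤ 1 := by
    have h2 : 0 ≤ Real.tanh n := my_tanh_nonneg hn0.le
    simp only [hBdef]; nlinarith
  -- the smooth function and its derivative
  obtain ⟨f, hfdef⟩ : ∃ f : ℝ → ℝ, f = fun x => A * Real.tanh (n * x) + B * x := ⟨_, rfl⟩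
  obtain ⟨D, hDdef⟩ : ∃ D : ℝ → ℝ, D = fun x => A * (1 / Real.cosh (n * x) ^ 2 * n) + B := ⟨_, rfl⟩
  have hf' : ∀ x : ℝ, HasDerivAt f (D x) x := by
    intro x
    have h1 : HasDerivAt (fun y : ℝ => n * y) n x := by
      simpa using (hasDerivAt_id x).const_mul n
    have h2 := (my_hasDerivAt_tanh (n * x)).comp x h1
    have h3 := (h2.const_mul A).add ((hasDerivAt_id x).const_mul B)
    have h4 : D x = A * (1 / Real.cosh (n * x) ^ 2 * n) + B * 1 := by rw [hDdef, mul_one]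
    rw [h4, hfdef]
    exact h3
  have hD0 : ∀ x : ℝ, 0 < D x := by
    intro x
    have hc1 := Real.cosh_pos (n * x)
    have : 0 < 1 / Real.cosh (n * x) ^ 2 := by positivity
    rw [hDdef]
    have hA0' := hA0
    positivity
  have hfeq : ∀ x : ℝ, deriv f x = D x := fun x => (hf' x).deriv
  have hfdiff : Differentiable ℝ f := fun x => (hf' x).differentiableAt
  have hf0 : f 0 = 0 := by simp [hfdef]
  have hf1 : f 1 = 1 := by simp only [hfdef, hBdef, mul_one]; ring
  have hfodd : ∀ x : ℝ, f (-x) = -f x := by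
    intro x; simp [hfdef, mul_neg, Real.tanh_neg]; ring
  -- clamp
  obtain ⟨g, hgdef⟩ : ∃ g : ℝ → ℝ, g = fun x => max (-1) (min 1 x) := ⟨_, rfl⟩
  have hg_id : ∀ x : ℝ, -1 ≤ x → x ≤ 1 → g x = x := by
    intro x h1 h2
    simp only [hgdef]
    rw [min_eq_right h2, max_eq_right h1]
  have hg_hi : ∀ x : ℝ, 1 ≤ x → g x = 1 := by
    intro x h
    simp only [hgdef]
    rw [min_eq_left h, max_eq_right (by norm_num : (-1:ℝ) ≤ 1)]
  have hg_lo : ∀ x : ℝ, x ≤ -1 → g x = -1 := by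
    intro x h
    simp only [hgdef]
    rw [min_eq_right (by linarith : x ≤ 1), max_eq_left h]
  obtain ⟨π, hπdef⟩ : ∃ π : ℝ → ℝ, π = fun x => f (g x) := ⟨_, rfl⟩
  -- local agreement with f on (-1,1)
  have hπ_evq : ∀ x ∈ Set.Ioo (-1:ℝ) 1, π =ᶠ[nhds x] f := by
    intro x hx
    filter_upwards [Ioo_mem_nhds hx.1 hx.2] with y hy
    simp only [hπdef]
    rw [hg_id y hy.1.le hy.2.le]
  have hπ_deriv : ∀ x ∈ Set.Ioo (-1:ℝ) 1, deriv π x = D x := by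
    intro x hx
    rw [(hπ_evq x hx).deriv_eq, hfeq]
  refine ⟨π, ?_, ?_, ?_, ?_, ?_, ?_⟩
  · -- odd
    intro x
    rcases le_total x (-1) with h | h
    · rw [hπdef]
      show f (g (-x)) = - f (g x)
      rw [hg_hi (-x) (by linarith), hg_lo x h]
      rw [show (-1:ℝ) = -(1:ℝ) by norm_num, hfodd, neg_neg]
    · rcases le_total 1 x with h' | h'
      · rw [hπdef]
        show f (g (-x)) = - f (g x)
        rw [hg_hi x h', hg_lo (-x) (by linarith)]
        rw [show (-1:ℝ) = -(1:ℝ) by norm_num, hfodd]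
      · rw [hπdef]
        show f (g (-x)) = - f (g x)
        rw [hg_id x h h', hg_id (-x) (by linarith) (by linarith), hfodd]
  · -- differentiable
    intro x hx
    exact (hfdiff x).congr_of_eventuallyEq (hπ_evq x hx)
  · -- positive derivative
    intro x hx
    rw [hπ_deriv x hx]
    exact hD0 x
  · -- concave
    have hπ_eqIcc : ∀ x ∈ Set.Icc (0:ℝ) 1, π x = f x := by
      intro x hx
      simp only [hπdef]
      rw [hg_id x (by linarith [hx.1]) hx.2]
    have hconcf : ConcaveOn ℝ (Set.Icc (0:ℝ) 1) f := by
      apply AntitoneOn.concaveOn_of_deriv (convex_Icc 0 1) hfdiff.continuous.continuousOn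
        (hfdiff.differentiableOn)
      rw [interior_Icc]
      intro x hx y hy hxy
      rw [hfeq, hfeq]
      simp only [hDdef]
      have hcx : 0 < Real.cosh (n * x) := Real.cosh_pos _
      have hcy : 0 < Real.cosh (n * y) := Real.cosh_pos _
      have hmono : Real.cosh (n * x) ≤ Real.cosh (n * y) := by
        rw [Real.cosh_le_cosh]
        rw [abs_of_nonneg (by nlinarith [hx.1] : (0:ℝ) ≤ n * x),
          abs_of_nonneg (by nlinarith [hx.1.le, hxy] : (0:ℝ) ≤ n * y)]
        nlinarith [hx.1]
      have : 1 / Real.cosh (n * y) ^ 2 ≤ 1 / Real.cosh (n * x) ^ 2 := by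
        apply one_div_le_one_div_of_le (by positivity)
        nlinarith
      nlinarith [mul_le_mul_of_nonneg_left this (mul_nonneg hA0.le hn0.le)]
    refine ⟨convex_Icc 0 1, ?_⟩
    intro x hx y hy a b ha hb hab
    have hmem : a • x + b • y ∈ Set.Icc (0:ℝ) 1 := (convex_Icc 0 1) hx hy ha hb hab
    rw [hπ_eqIcc x hx, hπ_eqIcc y hy, hπ_eqIcc _ hmem]
    exact hconcf.2 hx hy ha hb hab
  · -- equals 1 on [1,∞)
    intro x hx
    simp only [hπdef]
    rw [hg_hi x hx, hf1]
  · -- the points u, v and the ratio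
    have hivt := intermediate_value_Ioo (by norm_num : (0:ℝ) ≤ 1)
      hfdiff.continuous.continuousOn (a := 0) (b := 1)
    rw [hf0, hf1] at hivt
    obtain ⟨u, hu, hfu⟩ := hivt ⟨lt_trans hσ hσρ, hρ⟩
    obtain ⟨v, hv, hfv⟩ := hivt ⟨hσ, lt_trans hσρ (by linarith)⟩
    have huI : u ∈ Set.Ioo (-1:ℝ) 1 := ⟨by linarith [hu.1], hu.2⟩
    have hvI : v ∈ Set.Ioo (-1:ℝ) 1 := ⟨by linarith [hv.1], hv.2⟩
    have hπu : π u = ρ := by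
      simp only [hπdef]; rw [hg_id u (by linarith [hu.1]) hu.2.le]; exact hfu
    have hπv : π v = σ := by
      simp only [hπdef]; rw [hg_id v (by linarith [hv.1]) hv.2.le]; exact hfv
    simp only [hfdef] at hfu hfv
    refine ⟨u, v, huI, hvI, hπu, hπv, ?_⟩
    rw [hπ_deriv u huI, hπ_deriv v hvI]
    -- lower bound on D v
    have htnv0 : 0 ≤ Real.tanh (n * v) := my_tanh_nonneg (by nlinarith [hv.1, hn0] : (0:ℝ) ≤ n * v)
    have htnv : Real.tanh (n * v) ≤ σ / A := by
      rw [le_div_iff₀ hA0]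
      nlinarith [hv.1.le, hB0.le, hfv]
    have hsech_v : c / A ≤ 1 / Real.cosh (n * v) ^ 2 := by
      rw [my_one_div_cosh_sq]
      have h1 : Real.tanh (n * v) ^ 2 ≤ (σ / A) ^ 2 := by nlinarith
      have h2 : c / A = 1 - (σ / A) ^ 2 := by
        rw [hcdef]; field_simp
      rw [h2] at *
      linarith
    have hDv : 2 * M ≤ D v := by
      simp only [hDdef]
      have : n * c ≤ A * (1 / Real.cosh (n * v) ^ 2 * n) := by
        have := mul_le_mul_of_nonneg_left hsech_v (le_of_lt hA0)
        rw [mul_div_cancel₀ c hA0.ne'] at this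
        nlinarith
      linarith
    -- upper bound on D u
    have huδ : δ ≤ u := by
      have h1 : A * Real.tanh (n * u) + B * u = ρ := hfu
      have h2 : Real.tanh (n * u) < 1 := my_tanh_lt_one _
      have h3 : B * u ≥ ρ - A := by nlinarith
      nlinarith [hu.1.le]
    have hsech_u : 1 / Real.cosh (n * u) ^ 2 ≤ 1 / (A * n) := by
      have hcu : Real.exp (n * δ) / 2 ≤ Real.cosh (n * u) := by
        refine le_trans ?_ (le_trans (my_half_exp_le_cosh (n * u)) le_rfl)
        have : Real.exp (n * δ) ≤ Real.exp (n * u) :=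
          Real.exp_le_exp.2 (by nlinarith)
        linarith
      have hexp : n * δ ≤ Real.exp (n * δ) := by
        have := Real.add_one_le_exp (n * δ)
        nlinarith [hδ0, hn0]
      have hnd0 : 0 < n * δ := by positivity
      have hcu2 : n * δ / 2 ≤ Real.cosh (n * u) := le_trans (by linarith) hcu
      apply one_div_le_one_div_of_le (by positivity)
      -- need A * n ≤ cosh(n u)^2 ; cosh ≥ nδ/2, so cosh² ≥ n²δ²/4 ≥ A n since n ≥ 4A/δ²
      have h4 : n * δ / 2 * (n * δ / 2) ≤ Real.cosh (n * u) ^ 2 := by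
        rw [sq]
        exact mul_le_mul hcu2 hcu2 (by positivity) (Real.cosh_pos _).le
      have h5 : A * n ≤ n * δ / 2 * (n * δ / 2) := by
        rw [div_le_iff₀ (by positivity : (0:ℝ) < δ ^ 2)] at hnδ
        nlinarith
      linarith
    have hDu : D u ≤ 2 := by
      simp only [hDdef]
      have h6 : A * (1 / Real.cosh (n * u) ^ 2 * n) ≤ A * (1 / (A * n) * n) := by
        have := mul_le_mul_of_nonneg_right hsech_u hn0.le
        nlinarith
      have h7 : A * (1 / (A * n) * n) = 1 := by field_simp
      linarith
    -- conclude
    rw [le_div_iff₀ (hD0 u)]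
    nlinarith [hD0 u, hDv, hDu, hM]
end

section
/- Let f, g be real-valued C¹ functions of two variables and let (ρ*, σ*) ∈ (−1,1)² be a fixed point, with Jacobian matrix J = [[F, B], [C, G]] at (ρ*, σ*), where F = ∂_ρ f, B = ∂_σ f, C = ∂_ρ g, G = ∂_σ g, and assume G ≠ 0. Then there exists a function π in the class S (odd, π' > 0 on (−1,1), concave on [0,1], equal to 1 on [1,∞)) such that det(J) > 0 and (π'(u*)·F + π'(v*)·G)·(F + G) < 0, where u* = π⁻¹(ρ*) and v* = π⁻¹(σ*), if and only if the following conditions all hold: (1) det(J) = F·G − B·C > 0; (2) F/G < 0; and (3) either (a) F/G < −1 and |ρ*| > |σ*|, or (b) F/G > −1 and |ρ*| < |σ*|. -/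
open Set
set_option maxHeartbeats 1000000

lemma hasDerivAt_mul_abs (z : ℝ) :
    HasDerivAt (fun y : ℝ => y * |y|) (2 * |z|) z := by
  rcases lt_trichotomy z 0 with hz | hz | hz
  · have : HasDerivAt (fun y : ℝ => -(y * y)) (2 * |z|) z := by
      have := ((hasDerivAt_id z).fun_mul (hasDerivAt_id z)).fun_neg
      simpa [abs_of_neg hz, two_mul] using this
    refine this.congr_of_eventuallyEq ?_
    filter_upwards [eventually_lt_nhds hz] with y hy
    rw [abs_of_neg hy]; ring
  · subst hz
    rw [hasDerivAt_iff_isLittleO]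
    have : (fun y : ℝ => y * |y|) =o[nhds 0] (fun y : ℝ => y) := by
      rw [Asymptotics.isLittleO_iff]
      intro c hc
      have : ∀ᶠ y : ℝ in nhds 0, |y| < c := by
        have := eventually_abs_sub_lt (0:ℝ) hc
        simpa using this
      filter_upwards [this] with y hy
      rw [Real.norm_eq_abs, Real.norm_eq_abs, abs_mul, abs_abs]
      exact mul_le_mul_of_nonneg_left hy.le (abs_nonneg y) |>.trans_eq (mul_comm _ _) |>.trans_eq rfl
    simpa using this
  · have : HasDerivAt (fun y : ℝ => y * y) (2 * |z|) z := by
      have := (hasDerivAt_id z).fun_mul (hasDerivAt_id z)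
      simpa [abs_of_pos hz, two_mul] using this
    refine this.congr_of_eventuallyEq ?_
    filter_upwards [eventually_gt_nhds hz] with y hy
    rw [abs_of_pos hy]



lemma deriv_even_of_odd {π : ℝ → ℝ} (hodd : ∀ x, π (-x) = -π x) (x : ℝ) :
    deriv π (-x) = deriv π x := by
  have h1 : (fun y => π (-y)) = fun y => -π y := funext hodd
  have h2 := deriv_comp_neg π x
  rw [h1, deriv.fun_neg] at h2
  linarith

lemma hasDerivAt_odd_neg {π : ℝ → ℝ} (hodd : ∀ x, π (-x) = -π x) {x d : ℝ}
    (h : HasDerivAt π d x) : HasDerivAt π d (-x) := by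
  have h' : HasDerivAt π d (-(-x)) := by rw [neg_neg]; exact h
  have h1 : HasDerivAt (fun y : ℝ => π (-y)) (d * (-1)) (-x) := by
    have := h'.comp (-x) (hasDerivAt_neg (-x))
    simpa [Function.comp_def] using this
  have h2 : HasDerivAt (fun y : ℝ => -π (-y)) (-(d * (-1))) (-x) := h1.neg
  have h3 : (fun y : ℝ => -π (-y)) = π := funext fun y => by rw [hodd, neg_neg]
  rw [h3] at h2
  simpa using h2

lemma hasDerivAt_mul_max (z : ℝ) :
    HasDerivAt (fun y : ℝ => y * max y 0) (2 * max z 0) z := by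
  have habs := hasDerivAt_mul_abs z
  have heq : (fun y : ℝ => y * max y 0) = fun y : ℝ => (y * y + y * |y|) / 2 := by
    funext y
    rcases le_or_gt 0 y with h | h
    · rw [max_eq_left h, abs_of_nonneg h]; ring
    · rw [max_eq_right h.le, abs_of_neg h]; ring
  rw [heq]
  have h4 : HasDerivAt (fun y : ℝ => y * y) (2 * z) z := by
    have := (hasDerivAt_id z).fun_mul (hasDerivAt_id z)
    simpa [two_mul] using this
  have : HasDerivAt (fun y : ℝ => (y * y + y * |y|) / 2) ((2 * z + 2 * |z|)/2) z :=
    (h4.add habs).div_const 2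
  convert this using 1
  rcases le_or_gt 0 z with h | h
  · rw [max_eq_left h, abs_of_nonneg h]; ring
  · rw [max_eq_right h.le, abs_of_neg h]; ring

lemma switch_construction (p s M : ℝ) (hp : 0 ≤ p) (hps : p < s) (hs1 : s < 1) (hM : 0 < M) :
    ∃ π : ℝ → ℝ,
      (∀ x : ℝ, π (-x) = -π x) ∧
      (∀ x ∈ Set.Ioo (-1 : ℝ) 1, DifferentiableAt ℝ π x) ∧
      (∀ x ∈ Set.Ioo (-1 : ℝ) 1, 0 < deriv π x) ∧
      ConcaveOn ℝ (Set.Icc (0 : ℝ) 1) π ∧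
      (∀ x : ℝ, 1 ≤ x → π x = 1) ∧
      ∃ u v : ℝ, u ∈ Set.Ico (0:ℝ) 1 ∧ v ∈ Set.Ico (0:ℝ) 1 ∧
        π u = p ∧ π v = s ∧ M * deriv π v < deriv π u := by
  obtain ⟨h, hh_def⟩ : ∃ x : ℝ, x = (p + s) / 2 := ⟨_, rfl⟩
  obtain ⟨ε, hε_def⟩ : ∃ x : ℝ, x = (s - p) / 2 := ⟨_, rfl⟩
  obtain ⟨b, hb_def⟩ : ∃ x : ℝ, x = 1 - h := ⟨_, rfl⟩
  obtain ⟨v, hv_def⟩ : ∃ x : ℝ, x = 1 - (1 - s) / b := ⟨_, rfl⟩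
  have hh0 : 0 < h := by rw [hh_def]; linarith
  have hh1 : h < 1 := by rw [hh_def]; linarith
  have hb : 0 < b := by rw [hb_def]; linarith
  have hε : 0 < ε := by rw [hε_def]; linarith
  have hhs : h < s := by rw [hh_def]; linarith
  have hbh : b + h = 1 := by rw [hb_def]; ring
  have hv0 : 0 < v := by
    rw [hv_def]
    have : (1 - s) / b < 1 := (div_lt_one hb).mpr (by rw [hb_def]; linarith)
    linarith
  have hv1 : v < 1 := by
    rw [hv_def]
    have : 0 < (1 - s) / b := div_pos (by linarith) hb
    linarith
  have hsqrtpos : 0 < Real.sqrt (h * ε) / (M * b) :=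
    div_pos (Real.sqrt_pos.mpr (mul_pos hh0 hε)) (mul_pos hM hb)
  obtain ⟨m, hm_def⟩ : ∃ x : ℝ, x = min v (Real.sqrt (h * ε) / (M * b)) := ⟨_, rfl⟩
  have hm0 : 0 < m := by rw [hm_def]; exact lt_min hv0 hsqrtpos
  have hmv : m ≤ v := by rw [hm_def]; exact min_le_left _ _
  have hm1 : m < 1 := lt_of_le_of_lt hmv hv1
  obtain ⟨q, hq_def⟩ : ∃ x : ℝ, x = h / m ^ 2 := ⟨_, rfl⟩
  have hq : 0 < q := by rw [hq_def]; exact div_pos hh0 (by positivity)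
  have hqm : q * m ^ 2 = h := by rw [hq_def]; field_simp
  obtain ⟨a, ha_def⟩ : ∃ x : ℝ, x = b + 2 * q * m := ⟨_, rfl⟩
  obtain ⟨π, hπ_def⟩ : ∃ f : ℝ → ℝ, f = fun x =>
      if |x| ≤ m then a * x - q * (x * |x|)
      else if |x| < 1 then b * x + h * Real.sign x
      else Real.sign x := ⟨_, rfl⟩
  obtain ⟨R, hR_def⟩ : ∃ f : ℝ → ℝ,
      f = fun x => b * x + h - q * ((m - x) * max (m - x) 0) := ⟨_, rfl⟩
  -- π agrees with R on [0,1]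
  have hπR : ∀ x ∈ Icc (0:ℝ) 1, π x = R x := by
    intro x hx
    obtain ⟨hx0, hx1⟩ := hx
    simp only [hπ_def, hR_def]
    by_cases hxm : |x| ≤ m
    · rw [if_pos hxm]
      rw [abs_of_nonneg hx0] at hxm ⊢
      rw [max_eq_left (by linarith)]
      linear_combination x * ha_def + hqm
    · rw [if_neg hxm]
      rw [abs_of_nonneg hx0] at hxm
      push_neg at hxm
      rw [max_eq_right (by linarith)]
      by_cases hx1' : x < 1
      · rw [if_pos (by rw [abs_of_nonneg hx0]; exact hx1'),
          Real.sign_of_pos (lt_trans hm0 hxm)]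
        ring
      · have hx1'' : x = 1 := le_antisymm hx1 (not_lt.mp hx1')
        rw [if_neg (by rw [abs_of_nonneg hx0]; exact hx1'), Real.sign_of_pos (by linarith)]
        rw [hx1'']; linarith
  have hodd : ∀ x : ℝ, π (-x) = -π x := by
    intro x
    simp only [hπ_def, abs_neg]
    by_cases h1 : |x| ≤ m
    · rw [if_pos h1, if_pos h1]; ring
    · rw [if_neg h1, if_neg h1]
      by_cases h2 : |x| < 1
      · rw [if_pos h2, if_pos h2, Real.sign_neg]; ring
      · rw [if_neg h2, if_neg h2, Real.sign_neg]
  have hπ0 : π 0 = 0 := by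
    simp only [hπ_def]
    rw [if_pos (by simp [hm0.le])]
    simp
  have hRcont : Continuous R := by
    rw [hR_def]; fun_prop
  have hRderiv : ∀ x : ℝ, HasDerivAt R (b + 2 * q * max (m - x) 0) x := by
    intro x
    have h1 : HasDerivAt (fun y : ℝ => m - y) (-1) x := (hasDerivAt_id x).const_sub m
    have h2 := (hasDerivAt_mul_max (m - x)).comp x h1
    have h3 : HasDerivAt (fun y : ℝ => b * y) b x := by
      simpa using (hasDerivAt_id x).const_mul b
    have h2' : HasDerivAt (fun y : ℝ => (m - y) * max (m - y) 0)
        (2 * max (m - x) 0 * -1) x := by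
      simpa [Function.comp_def] using h2
    have h4 : HasDerivAt (fun y : ℝ => b * y + h - q * ((m - y) * max (m - y) 0))
        (b - q * (2 * max (m - x) 0 * -1)) x := (h3.add_const h).sub (h2'.const_mul q)
    rw [hR_def]
    convert h4 using 1
    ring
  have hD : ∀ x ∈ Ioo (-1:ℝ) 1, HasDerivAt π (b + 2 * q * max (m - |x|) 0) x := by
    have hpos : ∀ x ∈ Ioo (0:ℝ) 1, HasDerivAt π (b + 2 * q * max (m - x) 0) x := by
      intro x hx
      refine (hRderiv x).congr_of_eventuallyEq ?_
      filter_upwards [Ioo_mem_nhds hx.1 hx.2] with y hy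
      exact hπR y ⟨hy.1.le, hy.2.le⟩
    intro x hx
    rcases lt_trichotomy x 0 with h0 | h0 | h0
    · have hx' : -x ∈ Ioo (0:ℝ) 1 := ⟨by linarith, by linarith [hx.1]⟩
      have := hasDerivAt_odd_neg hodd (hpos (-x) hx')
      rw [neg_neg] at this
      rw [abs_of_neg h0]
      exact this
    · subst h0
      have hQ : HasDerivAt (fun y : ℝ => a * y - q * (y * |y|)) (a - q * (2 * |(0:ℝ)|)) 0 := by
        have h3 : HasDerivAt (fun y : ℝ => a * y) a 0 := by
          simpa using (hasDerivAt_id (0:ℝ)).const_mul a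
        exact h3.sub ((hasDerivAt_mul_abs 0).const_mul q)
      have heq : HasDerivAt π (a - q * (2 * |(0:ℝ)|)) 0 := by
        refine hQ.congr_of_eventuallyEq ?_
        filter_upwards [Ioo_mem_nhds (by linarith : -m < (0:ℝ)) hm0] with y hy
        simp only [hπ_def]
        rw [if_pos (abs_le.mpr ⟨hy.1.le, hy.2.le⟩)]
      convert heq using 1
      rw [abs_zero, sub_zero, max_eq_left hm0.le, ha_def]
      ring
    · have := hpos x ⟨h0, hx.2⟩
      rw [abs_of_pos h0]
      exact this
  have hderiv_eq : ∀ x ∈ Ioo (-1:ℝ) 1, deriv π x = b + 2 * q * max (m - |x|) 0 :=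
    fun x hx => (hD x hx).deriv
  have hdiff : ∀ x ∈ Ioo (-1:ℝ) 1, DifferentiableAt ℝ π x :=
    fun x hx => (hD x hx).differentiableAt
  have hderivpos : ∀ x ∈ Ioo (-1:ℝ) 1, 0 < deriv π x := by
    intro x hx
    rw [hderiv_eq x hx]
    have h1 : (0:ℝ) ≤ max (m - |x|) 0 := le_max_right _ _
    nlinarith
  have hcont01 : ContinuousOn π (Icc 0 1) :=
    (hRcont.continuousOn).congr hπR
  have hconc : ConcaveOn ℝ (Icc (0:ℝ) 1) π := by
    apply AntitoneOn.concaveOn_of_deriv (convex_Icc 0 1) hcont01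
    · rw [interior_Icc]
      intro x hx
      exact (hdiff x ⟨by linarith [hx.1], hx.2⟩).differentiableWithinAt
    · rw [interior_Icc]
      intro x hx y hy hxy
      rw [hderiv_eq x ⟨by linarith [hx.1], hx.2⟩, hderiv_eq y ⟨by linarith [hy.1], hy.2⟩,
        abs_of_pos hx.1, abs_of_pos hy.1]
      have : max (m - y) 0 ≤ max (m - x) 0 := max_le_max (by linarith) le_rfl
      nlinarith
  have hone : ∀ x : ℝ, 1 ≤ x → π x = 1 := by
    intro x hx
    simp only [hπ_def]
    rw [if_neg (by rw [abs_of_nonneg (by linarith)]; push_neg; linarith),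
      if_neg (by rw [abs_of_nonneg (by linarith)]; push_neg; linarith),
      Real.sign_of_pos (by linarith)]
  -- the point v
  have hπv : π v = s := by
    rw [hπR v ⟨hv0.le, hv1.le⟩]
    simp only [hR_def]
    rw [max_eq_right (by linarith)]
    have hbv : b * v = b - (1 - s) := by
      rw [hv_def]; field_simp
    linear_combination hbv + hbh
  have hdv : deriv π v = b := by
    rw [hderiv_eq v ⟨by linarith, hv1⟩, abs_of_nonneg hv0.le,
      max_eq_right (by linarith)]
    ring
  -- the point u via IVT
  have hπm : π m = b * m + h := by
    rw [hπR m ⟨hm0.le, hm1.le⟩]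
    simp only [hR_def]
    simp
  have hcontm : ContinuousOn π (Icc 0 m) :=
    hcont01.mono (Icc_subset_Icc le_rfl hm1.le)
  have hmem : p ∈ Icc (π 0) (π m) := by
    rw [hπ0, hπm]
    constructor
    · exact hp
    · have h1 : 0 ≤ b * m := by positivity
      have h2 : p < h := by rw [hh_def]; linarith
      linarith
  obtain ⟨u, hu, hπu⟩ := intermediate_value_Icc hm0.le hcontm hmem
  have humem : u ∈ Ico (0:ℝ) 1 := ⟨hu.1, lt_of_le_of_lt hu.2 hm1⟩
  have hdu : deriv π u = b + 2 * q * (m - u) := by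
    rw [hderiv_eq u ⟨by linarith [hu.1], humem.2⟩, abs_of_nonneg hu.1,
      max_eq_left (by linarith [hu.2])]
  have hueq : b * u + h - q * ((m - u) * (m - u)) = p := by
    have h1 := hπR u ⟨hu.1, by linarith [hu.2]⟩
    rw [h1] at hπu
    simp only [hR_def] at hπu
    rw [max_eq_left (by linarith [hu.2])] at hπu
    exact hπu
  have hεeq : h - p = ε := by rw [hh_def, hε_def]; ring
  have key : (b + 2 * q * (m - u)) ^ 2 = b ^ 2 + 4 * q * b * m + 4 * q * (h - p) := by
    linear_combination (-4 * q) * hueq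
  have hm2 : m ^ 2 * (M * b) ^ 2 ≤ h * ε := by
    have hle : m ≤ Real.sqrt (h * ε) / (M * b) := by rw [hm_def]; exact min_le_right _ _
    have hMb : 0 < M * b := mul_pos hM hb
    have h1 : m * (M * b) ≤ Real.sqrt (h * ε) := (le_div_iff₀ hMb).mp hle
    have h2 : (m * (M * b)) ^ 2 ≤ Real.sqrt (h * ε) ^ 2 :=
      pow_le_pow_left₀ (by positivity) h1 2
    rw [Real.sq_sqrt (by positivity)] at h2
    calc m ^ 2 * (M * b) ^ 2 = (m * (M * b)) ^ 2 := by ring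
      _ ≤ h * ε := h2
  have h4q : (M * b) ^ 2 < (b + 2 * q * (m - u)) ^ 2 := by
    rw [key, hεeq]
    have hq1 : m ^ 2 * (M * b) ^ 2 ≤ q * m ^ 2 * ε := by
      calc m ^ 2 * (M * b) ^ 2 ≤ h * ε := hm2
        _ = q * m ^ 2 * ε := by rw [hqm]
    have hm2pos : 0 < m ^ 2 := by positivity
    have hq2 : (M * b) ^ 2 ≤ q * ε := by
      refine le_of_mul_le_mul_right ?_ hm2pos
      calc (M * b) ^ 2 * m ^ 2 = m ^ 2 * (M * b) ^ 2 := by ring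
        _ ≤ q * m ^ 2 * ε := hq1
        _ = q * ε * m ^ 2 := by ring
    have e1 : 0 < q * ε := mul_pos hq hε
    have e2 : 0 < q * b * m := mul_pos (mul_pos hq hb) hm0
    linarith [hq2, e1, e2, sq_nonneg b]
  have hfinal : M * b < b + 2 * q * (m - u) := by
    refine lt_of_pow_lt_pow_left₀ 2 ?_ h4q
    have h1 : 0 ≤ m - u := by linarith [hu.2]
    have h2 : 0 ≤ 2 * q * (m - u) := by positivity
    linarith
  exact ⟨π, hodd, hdiff, hderivpos, hconc, hone, u, v, humem, ⟨hv0.le, hv1⟩, hπu, hπv,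
    by rw [hdu, hdv]; exact hfinal⟩

lemma deriv_le_of_abs_le {π : ℝ → ℝ} (hodd : ∀ x, π (-x) = -π x)
    (hdiff : ∀ x ∈ Set.Ioo (-1:ℝ) 1, DifferentiableAt ℝ π x)
    (hconc : ConcaveOn ℝ (Set.Icc (0:ℝ) 1) π)
    {x y : ℝ} (hx : x ∈ Set.Ioo (-1:ℝ) 1) (hy : y ∈ Set.Ioo (-1:ℝ) 1)
    (hxy : |x| ≤ |y|) : deriv π y ≤ deriv π x := by
  have habs : ∀ z : ℝ, deriv π z = deriv π |z| := by
    intro z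
    rcases le_or_gt 0 z with h | h
    · rw [abs_of_nonneg h]
    · rw [abs_of_neg h, deriv_even_of_odd hodd z]
  rw [habs x, habs y]
  have hy1 : |y| < 1 := abs_lt.mpr ⟨hy.1, hy.2⟩
  have hconc' : ConcaveOn ℝ (Icc (0:ℝ) |y|) π :=
    hconc.subset (Icc_subset_Icc le_rfl hy1.le) (convex_Icc _ _)
  have hdiff' : ∀ z ∈ Icc (0:ℝ) |y|, DifferentiableAt ℝ π z :=
    fun z hz => hdiff z ⟨by linarith [hz.1], lt_of_le_of_lt hz.2 hy1⟩
  exact (hconc'.antitoneOn_deriv hdiff') ⟨abs_nonneg x, hxy⟩ ⟨abs_nonneg y, le_rfl⟩ hxy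

lemma abs_pi_lt_abs_pi {π : ℝ → ℝ} (hodd : ∀ x, π (-x) = -π x)
    (hdiff : ∀ x ∈ Set.Ioo (-1:ℝ) 1, DifferentiableAt ℝ π x)
    (hderiv : ∀ x ∈ Set.Ioo (-1:ℝ) 1, 0 < deriv π x)
    {x y : ℝ} (hx : x ∈ Set.Ioo (-1:ℝ) 1) (hy : y ∈ Set.Ioo (-1:ℝ) 1)
    (hxy : |x| < |y|) : |π x| < |π y| := by
  have hmono : StrictMonoOn π (Ioo (-1:ℝ) 1) := by
    apply strictMonoOn_of_deriv_pos (convex_Ioo _ _)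
    · exact fun z hz => (hdiff z hz).continuousAt.continuousWithinAt
    · rw [interior_Ioo]; exact hderiv
  have hπ0 : π 0 = 0 := by have := hodd 0; simp at this; linarith
  have h01 : (0:ℝ) ∈ Ioo (-1:ℝ) 1 := ⟨by norm_num, by norm_num⟩
  have habs : ∀ z ∈ Ioo (-1:ℝ) 1, |π z| = π |z| := by
    intro z hz
    rcases lt_trichotomy z 0 with h | h | h
    · have hz' : -z ∈ Ioo (-1:ℝ) 1 := ⟨by linarith [hz.2], by linarith [hz.1]⟩
      have h1 : π z = -π (-z) := by
        have := hodd (-z); rw [neg_neg] at this; linarith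
      have h2 : 0 < π (-z) := by
        rw [← hπ0]; exact hmono h01 hz' (by linarith)
      rw [abs_of_neg h, h1, abs_neg, abs_of_pos h2]
    · subst h; simp [hπ0]
    · rw [abs_of_pos h, abs_of_nonneg ?_]
      · rw [← hπ0]; exact (hmono h01 hz h).le
  have hxIoo : |x| ∈ Ioo (-1:ℝ) 1 := ⟨by linarith [abs_nonneg x], abs_lt.mpr ⟨hx.1, hx.2⟩⟩
  have hyIoo : |y| ∈ Ioo (-1:ℝ) 1 := ⟨by linarith [abs_nonneg y], abs_lt.mpr ⟨hy.1, hy.2⟩⟩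
  rw [habs x hx, habs y hy]
  exact hmono hxIoo hyIoo hxy

/-- Characterization of when a switching function `π` in the class `S` (odd, with
positive derivative on `(−1,1)`, concave on `[0,1]`, equal to `1` on `[1,∞)`) can
change the stability of a fixed point `(ρ*, σ*) ∈ (−1,1)²` whose Jacobian (with the
ramp regularization) is `J = [[F, B], [C, G]]`: there exists `π ∈ S` with
`det J > 0` and `(π'(u*)·F + π'(v*)·G)·(F + G) < 0` (where `π(u*) = ρ*`,
`π(v*) = σ*`) if and only if `det J = F·G − B·C > 0`, `F/G < 0`, and either
`F/G < −1 ∧ |ρ*| > |σ*|` or `F/G > −1 ∧ |ρ*| < |σ*|`. -/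
theorem stability_change_characterization
    (F B C G ρ σ : ℝ) (hG : G ≠ 0)
    (hρ : ρ ∈ Set.Ioo (-1 : ℝ) 1) (hσ : σ ∈ Set.Ioo (-1 : ℝ) 1) :
    (∃ π : ℝ → ℝ,
      (∀ x : ℝ, π (-x) = -π x) ∧
      (∀ x ∈ Set.Ioo (-1 : ℝ) 1, DifferentiableAt ℝ π x) ∧
      (∀ x ∈ Set.Ioo (-1 : ℝ) 1, 0 < deriv π x) ∧
      ConcaveOn ℝ (Set.Icc (0 : ℝ) 1) π ∧
      (∀ x : ℝ, 1 ≤ x → π x = 1) ∧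
      ∃ u v : ℝ, u ∈ Set.Ioo (-1 : ℝ) 1 ∧ v ∈ Set.Ioo (-1 : ℝ) 1 ∧
        π u = ρ ∧ π v = σ ∧
        F * G - B * C > 0 ∧
        (deriv π u * F + deriv π v * G) * (F + G) < 0)
    ↔
    (F * G - B * C > 0 ∧ F / G < 0 ∧
      ((F / G < -1 ∧ |ρ| > |σ|) ∨ (F / G > -1 ∧ |ρ| < |σ|))) := by
  constructor
  · rintro ⟨π, hodd, hdiff, hderiv, hconc, hone, u, v, hu, hv, hπu, hπv, hdet, hlt⟩
    have ha : 0 < deriv π u := hderiv u hu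
    have hb : 0 < deriv π v := hderiv v hv
    set a := deriv π u with ha_def
    set b := deriv π v with hb_def
    have hFG : F * G < 0 := by
      by_contra hcon
      push_neg at hcon
      nlinarith [mul_nonneg ha.le (sq_nonneg F), mul_nonneg hb.le (sq_nonneg G),
        mul_nonneg ha.le hcon, mul_nonneg hb.le hcon]
    have hF : F ≠ 0 := by rintro rfl; rw [zero_mul] at hFG; exact lt_irrefl 0 hFG
    have hFGdiv : F / G < 0 := by
      rcases mul_neg_iff.mp hFG with ⟨h1, h2⟩ | ⟨h1, h2⟩
      · exact div_neg_of_pos_of_neg h1 h2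
      · exact div_neg_of_neg_of_pos h1 h2
    have hsum : F + G ≠ 0 := by
      intro h0
      rw [h0, mul_zero] at hlt
      exact lt_irrefl 0 hlt
    refine ⟨hdet, hFGdiv, ?_⟩
    have habsne : |F| ≠ |G| := by
      intro hEq
      apply hsum
      rcases mul_neg_iff.mp hFG with ⟨h1, h2⟩ | ⟨h1, h2⟩
      · rw [abs_of_pos h1, abs_of_neg h2] at hEq; linarith
      · rw [abs_of_neg h1, abs_of_pos h2] at hEq; linarith
    rcases lt_or_gt_of_ne habsne with hFlt | hFgt
    · -- |F| < |G| : case (b)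
      right
      have hab : b < a := by
        by_contra hcon
        push_neg at hcon  -- a ≤ b
        rcases mul_neg_iff.mp hFG with ⟨hF0, hG0⟩ | ⟨hF0, hG0⟩
        · -- F > 0, G < 0, F + G < 0
          have hs : F + G < 0 := by
            rw [abs_of_pos hF0, abs_of_neg hG0] at hFlt; linarith
          have k1 : b * G ≤ a * G := mul_le_mul_of_nonpos_right hcon hG0.le
          have k3 : a * (F + G) < 0 := mul_neg_of_pos_of_neg ha hs
          have : 0 < (a * F + b * G) * (F + G) :=
            mul_pos_of_neg_of_neg (by nlinarith) hs
          linarith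
        · -- F < 0, G > 0, F + G > 0
          have hs : 0 < F + G := by
            rw [abs_of_neg hF0, abs_of_pos hG0] at hFlt; linarith
          have k1 : a * G ≤ b * G := mul_le_mul_of_nonneg_right hcon hG0.le
          have k3 : 0 < a * (F + G) := mul_pos ha hs
          have : 0 < (a * F + b * G) * (F + G) := mul_pos (by nlinarith) hs
          linarith
      have huv : |u| < |v| := by
        by_contra hcon
        push_neg at hcon
        exact absurd (deriv_le_of_abs_le hodd hdiff hconc hv hu hcon) (not_le.mpr hab)
      constructor
      · -- F/G > -1
        have h1 : (F + G) / G = F / G + 1 := by field_simp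
        have h2 : 0 < (F + G) / G := by
          rcases mul_neg_iff.mp hFG with ⟨hF0, hG0⟩ | ⟨hF0, hG0⟩
          · apply div_pos_of_neg_of_neg ?_ hG0
            rw [abs_of_pos hF0, abs_of_neg hG0] at hFlt; linarith
          · apply div_pos ?_ hG0
            rw [abs_of_neg hF0, abs_of_pos hG0] at hFlt; linarith
        rw [h1] at h2; linarith
      · rw [← hπu, ← hπv]
        exact abs_pi_lt_abs_pi hodd hdiff hderiv hu hv huv
    · -- |G| < |F| : case (a)
      left
      have hab : a < b := by
        by_contra hcon
        push_neg at hcon  -- b ≤ a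
        rcases mul_neg_iff.mp hFG with ⟨hF0, hG0⟩ | ⟨hF0, hG0⟩
        · -- F > 0, G < 0, F + G > 0
          have hs : 0 < F + G := by
            rw [abs_of_pos hF0, abs_of_neg hG0] at hFgt; linarith
          have k1 : b * F ≤ a * F := mul_le_mul_of_nonneg_right hcon hF0.le
          have : 0 < (a * F + b * G) * (F + G) :=
            mul_pos (by nlinarith [mul_pos hb hs]) hs
          linarith
        · -- F < 0, G > 0, F + G < 0
          have hs : F + G < 0 := by
            rw [abs_of_neg hF0, abs_of_pos hG0] at hFgt; linarith
          have k1 : a * F ≤ b * F := mul_le_mul_of_nonpos_right hcon hF0.le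
          have : 0 < (a * F + b * G) * (F + G) :=
            mul_pos_of_neg_of_neg (by nlinarith [mul_neg_of_pos_of_neg hb hs]) hs
          linarith
      have hvu : |v| < |u| := by
        by_contra hcon
        push_neg at hcon
        exact absurd (deriv_le_of_abs_le hodd hdiff hconc hu hv hcon) (not_le.mpr hab)
      constructor
      · -- F/G < -1
        have h1 : (F + G) / G = F / G + 1 := by field_simp
        have h2 : (F + G) / G < 0 := by
          rcases mul_neg_iff.mp hFG with ⟨hF0, hG0⟩ | ⟨hF0, hG0⟩
          · apply div_neg_of_pos_of_neg ?_ hG0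
            rw [abs_of_pos hF0, abs_of_neg hG0] at hFgt; linarith
          · apply div_neg_of_neg_of_pos ?_ hG0
            rw [abs_of_neg hF0, abs_of_pos hG0] at hFgt; linarith
        rw [h1] at h2; linarith
      · rw [← hπu, ← hπv]
        exact abs_pi_lt_abs_pi hodd hdiff hderiv hv hu hvu
  · rintro ⟨hdet, hFGdiv, hcase⟩
    have hFG : F * G < 0 := by
      rcases div_neg_iff.mp hFGdiv with ⟨h1, h2⟩ | ⟨h1, h2⟩
      · exact mul_neg_of_pos_of_neg h1 h2
      · exact mul_neg_of_neg_of_pos h1 h2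
    have hF : F ≠ 0 := by
      rcases mul_neg_iff.mp hFG with ⟨h1, _⟩ | ⟨h1, _⟩
      exacts [ne_of_gt h1, ne_of_lt h1]
    have hFabs : 0 < |F| := abs_pos.mpr hF
    have hGabs : 0 < |G| := abs_pos.mpr hG
    rcases hcase with ⟨hlt1, habs⟩ | ⟨hgt1, habs⟩
    · -- case (a): F/G < -1 and |σ| < |ρ|; steep point carries σ
      obtain ⟨π, hodd, hdiff, hderiv, hconc, hone, u, v, hu, hv, hπu, hπv, hkey⟩ :=
        switch_construction |σ| |ρ| (|F| / |G|) (abs_nonneg σ) habs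
          (abs_lt.mpr ⟨hρ.1, hρ.2⟩) (div_pos hFabs hGabs)
      have huI : u ∈ Ioo (-1:ℝ) 1 := ⟨by linarith [hu.1], hu.2⟩
      have hvI : v ∈ Ioo (-1:ℝ) 1 := ⟨by linarith [hv.1], hv.2⟩
      have hA : 0 < deriv π v := hderiv v hvI
      have hBu : 0 < deriv π u := hderiv u huI
      -- |F|/|G| * deriv π v < deriv π u  ⟹  |F| * deriv π v < |G| * deriv π u
      have hAF : |F| * deriv π v < |G| * deriv π u := by
        have := (div_lt_iff₀ hGabs).mp ((div_mul_eq_mul_div |F| |G| (deriv π v)) ▸ hkey)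
        linarith
      -- build signed points
      obtain ⟨v', hv'I, hπv', hdv'⟩ :
          ∃ w, w ∈ Ioo (-1:ℝ) 1 ∧ π w = ρ ∧ deriv π w = deriv π v := by
        rcases le_or_gt 0 ρ with h0 | h0
        · exact ⟨v, hvI, by rw [hπv, abs_of_nonneg h0], rfl⟩
        · refine ⟨-v, ⟨by linarith [hv.2], by linarith [hv.1]⟩, ?_, deriv_even_of_odd hodd v⟩
          rw [hodd, hπv, abs_of_neg h0, neg_neg]
      obtain ⟨u', hu'I, hπu', hdu'⟩ :
          ∃ w, w ∈ Ioo (-1:ℝ) 1 ∧ π w = σ ∧ deriv π w = deriv π u := by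
        rcases le_or_gt 0 σ with h0 | h0
        · exact ⟨u, huI, by rw [hπu, abs_of_nonneg h0], rfl⟩
        · refine ⟨-u, ⟨by linarith [hu.2], by linarith [hu.1]⟩, ?_, deriv_even_of_odd hodd u⟩
          rw [hodd, hπu, abs_of_neg h0, neg_neg]
      refine ⟨π, hodd, hdiff, hderiv, hconc, hone, v', u', hv'I, hu'I, hπv', hπu', hdet, ?_⟩
      rw [hdv', hdu']
      rcases div_neg_iff.mp hFGdiv with ⟨hF0, hG0⟩ | ⟨hF0, hG0⟩
      · -- F > 0, G < 0 : F/G < -1 ⟹ -G < F ⟹ F + G > 0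
        have hs : 0 < F + G := by
          have := (div_lt_iff_of_neg hG0).mp hlt1
          linarith
        apply mul_neg_of_neg_of_pos ?_ hs
        rw [abs_of_pos hF0, abs_of_neg hG0] at hAF
        nlinarith
      · -- F < 0, G > 0 : F/G < -1 ⟹ F < -G ⟹ F + G < 0
        have hs : F + G < 0 := by
          have := (div_lt_iff₀ hG0).mp hlt1
          linarith
        apply mul_neg_of_pos_of_neg ?_ hs
        rw [abs_of_neg hF0, abs_of_pos hG0] at hAF
        nlinarith
    · -- case (b): F/G > -1 and |ρ| < |σ|; steep point carries ρ
      obtain ⟨π, hodd, hdiff, hderiv, hconc, hone, u, v, hu, hv, hπu, hπv, hkey⟩ :=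
        switch_construction |ρ| |σ| (|G| / |F|) (abs_nonneg ρ) habs
          (abs_lt.mpr ⟨hσ.1, hσ.2⟩) (div_pos hGabs hFabs)
      have huI : u ∈ Ioo (-1:ℝ) 1 := ⟨by linarith [hu.1], hu.2⟩
      have hvI : v ∈ Ioo (-1:ℝ) 1 := ⟨by linarith [hv.1], hv.2⟩
      have hAF : |G| * deriv π v < |F| * deriv π u := by
        have := (div_lt_iff₀ hFabs).mp ((div_mul_eq_mul_div |G| |F| (deriv π v)) ▸ hkey)
        linarith
      obtain ⟨u', hu'I, hπu', hdu'⟩ :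
          ∃ w, w ∈ Ioo (-1:ℝ) 1 ∧ π w = ρ ∧ deriv π w = deriv π u := by
        rcases le_or_gt 0 ρ with h0 | h0
        · exact ⟨u, huI, by rw [hπu, abs_of_nonneg h0], rfl⟩
        · refine ⟨-u, ⟨by linarith [hu.2], by linarith [hu.1]⟩, ?_, deriv_even_of_odd hodd u⟩
          rw [hodd, hπu, abs_of_neg h0, neg_neg]
      obtain ⟨v', hv'I, hπv', hdv'⟩ :
          ∃ w, w ∈ Ioo (-1:ℝ) 1 ∧ π w = σ ∧ deriv π w = deriv π v := by
        rcases le_or_gt 0 σ with h0 | h0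
        · exact ⟨v, hvI, by rw [hπv, abs_of_nonneg h0], rfl⟩
        · refine ⟨-v, ⟨by linarith [hv.2], by linarith [hv.1]⟩, ?_, deriv_even_of_odd hodd v⟩
          rw [hodd, hπv, abs_of_neg h0, neg_neg]
      refine ⟨π, hodd, hdiff, hderiv, hconc, hone, u', v', hu'I, hv'I, hπu', hπv', hdet, ?_⟩
      rw [hdu', hdv']
      rcases div_neg_iff.mp hFGdiv with ⟨hF0, hG0⟩ | ⟨hF0, hG0⟩
      · -- F > 0, G < 0 : F/G > -1 ⟹ F < -G ⟹ F + G < 0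
        have hs : F + G < 0 := by
          have := (lt_div_iff_of_neg hG0).mp hgt1
          linarith
        apply mul_neg_of_pos_of_neg ?_ hs
        rw [abs_of_pos hF0, abs_of_neg hG0] at hAF
        nlinarith
      · -- F < 0, G > 0 : F/G > -1 ⟹ -G < F ⟹ F + G > 0
        have hs : 0 < F + G := by
          have := (lt_div_iff₀ hG0).mp hgt1
          linarith
        apply mul_neg_of_neg_of_pos ?_ hs
        rw [abs_of_neg hF0, abs_of_pos hG0] at hAF
        nlinarith
end

section
/- Let a₁, a₂, p, q, r be real numbers with q ≠ 0 and p² + r·q < 0, and let ω = √(−(p² + rq)) > 0. Define F_xx = −2a₁p, F_xy = −ω·a₁, G_xx = (2p/ω)·(a₁p + a₂q), and G_xy = a₁p + a₂q. Then (1/(16ω))·(F_xx·F_xy − G_xx·G_xy − F_xx·G_xx) = p·q·(a₁²·r + a₂²·q) / (8·(p² + rq)). In particular, since p² + rq < 0, this quantity is negative if and only if p·q·(a₁²·r + a₂²·q) > 0. -/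
/-- Computation of the first Lyapunov coefficient of a Hopf bifurcation: with
`ω = √(−(p² + rq)) > 0`, `F_xx = −2a₁p`, `F_xy = −ωa₁`, `G_xx = (2p/ω)(a₁p + a₂q)`,
`G_xy = a₁p + a₂q`, one has
`(1/(16ω))·(F_xx·F_xy − G_xx·G_xy − F_xx·G_xx) = pq(a₁²r + a₂²q)/(8(p² + rq))`;
in particular this quantity is negative iff `pq(a₁²r + a₂²q) > 0`. -/
theorem lyapunov_coefficient_formula
    (a₁ a₂ p q r : ℝ) (hq : q ≠ 0) (hdisc : p ^ 2 + r * q < 0)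
    (ω Fxx Fxy Gxx Gxy : ℝ)
    (hω : ω = Real.sqrt (-(p ^ 2 + r * q)))
    (hFxx : Fxx = -2 * a₁ * p)
    (hFxy : Fxy = -ω * a₁)
    (hGxx : Gxx = (2 * p / ω) * (a₁ * p + a₂ * q))
    (hGxy : Gxy = a₁ * p + a₂ * q) :
    0 < ω ∧
    (1 / (16 * ω)) * (Fxx * Fxy - Gxx * Gxy - Fxx * Gxx)
      = p * q * (a₁ ^ 2 * r + a₂ ^ 2 * q) / (8 * (p ^ 2 + r * q)) ∧
    ((1 / (16 * ω)) * (Fxx * Fxy - Gxx * Gxy - Fxx * Gxx) < 0 ↔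
      0 < p * q * (a₁ ^ 2 * r + a₂ ^ 2 * q)) := by
  have hωpos : 0 < ω := by
    rw [hω]; exact Real.sqrt_pos.mpr (by linarith)
  have hω2 : ω ^ 2 = -(p ^ 2 + r * q) := by
    rw [hω, Real.sq_sqrt (by linarith)]
  have hωne : ω ≠ 0 := ne_of_gt hωpos
  have hDne : p ^ 2 + r * q ≠ 0 := ne_of_lt hdisc
  have heq : (1 / (16 * ω)) * (Fxx * Fxy - Gxx * Gxy - Fxx * Gxx)
      = p * q * (a₁ ^ 2 * r + a₂ ^ 2 * q) / (8 * (p ^ 2 + r * q)) := by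
    have hD : p ^ 2 + r * q = -ω ^ 2 := by linarith
    subst hFxx hFxy hGxx hGxy
    rw [hD]
    field_simp
    linear_combination (16*a₁^2*p) * hω2
  refine ⟨hωpos, heq, ?_⟩
  rw [heq, div_neg_iff]
  constructor
  · rintro (⟨h1, h2⟩ | ⟨h1, h2⟩)
    · exact h1
    · nlinarith
  · intro h
    left
    exact ⟨h, by nlinarith⟩
end

section
/- For real parameters a₂ and κ, the map Ψ(u, v) = ((11/2)uv − u + 5v, κ(a₂uv − (1/2)u + v)) has total derivative at the origin equal to the matrix [[−1, 5], [−κ/2, κ]]. For κ = 1, this matrix has trace 0 and determinant 3/2, hence its eigenvalues are ±i√(3/2). Moreover, with a₁ = 11/2, b₁ = −1, c₁ = 5, d₁ = 0, b₂ = −1/2, c₂ = 1, d₂ = 0, the quantity a₁²(a₂d₂ − b₂c₂) − a₂²(a₁d₁ − b₁c₁) equals 121/8 − 5a₂², which is positive whenever 3/2 < a₂ < 11√10/20. -/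
/-- The map `Ψ(u,v) = ((11/2)uv − u + 5v, κ(a₂uv − (1/2)u + v))` has total derivative
`[[−1, 5], [−κ/2, κ]]` at the origin; for `κ = 1` this matrix has trace `0` and
determinant `3/2`, hence eigenvalues `±i√(3/2)`; and with `a₁ = 11/2, b₁ = −1, c₁ = 5,
d₁ = 0, b₂ = −1/2, c₂ = 1, d₂ = 0` the quantity
`a₁²(a₂d₂ − b₂c₂) − a₂²(a₁d₁ − b₁c₁)` equals `121/8 − 5a₂²`, positive for
`3/2 < a₂ < 11√10/20`. -/
theorem ramp_example2_hopf_data (a₂ κ : ℝ)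
    (Ψ : (Fin 2 → ℝ) → (Fin 2 → ℝ))
    (hΨ : ∀ w : Fin 2 → ℝ,
      Ψ w = ![(11 / 2) * w 0 * w 1 - w 0 + 5 * w 1,
              κ * (a₂ * w 0 * w 1 - (1 / 2) * w 0 + w 1)]) :
    HasFDerivAt Ψ
      (LinearMap.toContinuousLinearMap
        (Matrix.mulVecLin !![(-1 : ℝ), 5; -κ / 2, κ])) 0 ∧
    Matrix.trace !![(-1 : ℝ), 5; -(1 / 2), 1] = 0 ∧
    Matrix.det !![(-1 : ℝ), 5; -(1 / 2), 1] = 3 / 2 ∧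
    (∃ w : Fin 2 → ℂ, w ≠ 0 ∧
      (!![(-1 : ℂ), 5; -(1 / 2), 1]).mulVec w
        = (Complex.I * Real.sqrt (3 / 2)) • w) ∧
    (∃ w : Fin 2 → ℂ, w ≠ 0 ∧
      (!![(-1 : ℂ), 5; -(1 / 2), 1]).mulVec w
        = (-(Complex.I * Real.sqrt (3 / 2))) • w) ∧
    (11 / 2 : ℝ) ^ 2 * (a₂ * 0 - (-(1 / 2)) * 1) - a₂ ^ 2 * ((11 / 2) * 0 - (-1) * 5)
      = 121 / 8 - 5 * a₂ ^ 2 ∧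
    (3 / 2 < a₂ → a₂ < 11 * Real.sqrt 10 / 20 → 0 < 121 / 8 - 5 * a₂ ^ 2) := by
  have hr : ((Real.sqrt (3 / 2) : ℝ) : ℂ) ^ 2 = 3 / 2 := by
    norm_cast
    rw [Real.sq_sqrt] <;> norm_num
  have key : (Complex.I * (Real.sqrt (3 / 2) : ℝ)) ^ 2 = -(3 / 2) := by
    rw [mul_pow, Complex.I_sq, hr]; ring
  have hp0 : HasFDerivAt (fun w : Fin 2 → ℝ => w 0)
      (ContinuousLinearMap.proj (R := ℝ) (φ := fun _ : Fin 2 => ℝ) 0) (0 : Fin 2 → ℝ) :=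
    (ContinuousLinearMap.proj (R := ℝ) (φ := fun _ : Fin 2 => ℝ) 0).hasFDerivAt
  have hp1 : HasFDerivAt (fun w : Fin 2 → ℝ => w 1)
      (ContinuousLinearMap.proj (R := ℝ) (φ := fun _ : Fin 2 => ℝ) 1) (0 : Fin 2 → ℝ) :=
    (ContinuousLinearMap.proj (R := ℝ) (φ := fun _ : Fin 2 => ℝ) 1).hasFDerivAt
  refine ⟨?_, by norm_num [Matrix.trace_fin_two],
      by norm_num [Matrix.det_fin_two], ?_, ?_, by ring, ?_⟩
  · apply hasFDerivAt_pi''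
    intro i
    fin_cases i
    · have h := (((hp0.mul hp1).const_mul ((11:ℝ)/2)).sub hp0).add (hp1.const_mul 5)
      exact (h.congr_fderiv (by
          ext w
          simp [Matrix.mulVecLin, Matrix.mulVec, dotProduct, Fin.sum_univ_two]
          try ring)).congr_of_eventuallyEq (by
        filter_upwards with w
        rw [hΨ]
        simp only [Matrix.cons_val_zero, Matrix.cons_val_one, Matrix.head_cons,
          Fin.isValue, Fin.mk_zero, Fin.mk_one]
        simp only [Pi.add_apply, Pi.sub_apply, Pi.mul_apply]
        ring)
    · have h := (((hp0.mul hp1).const_mul (a₂)).sub (hp0.const_mul ((1:ℝ)/2))).add hp1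
      have h2 := h.const_mul κ
      exact (h2.congr_fderiv (by
          ext w
          simp [Matrix.mulVecLin, Matrix.mulVec, dotProduct, Fin.sum_univ_two]
          try ring)).congr_of_eventuallyEq (by
        filter_upwards with w
        rw [hΨ]
        simp only [Matrix.cons_val_zero, Matrix.cons_val_one, Matrix.head_cons,
          Fin.isValue, Fin.mk_zero, Fin.mk_one]
        simp only [Pi.add_apply, Pi.sub_apply, Pi.mul_apply]
        ring)
  · refine ⟨![5, 1 + Complex.I * Real.sqrt (3 / 2)], ?_, ?_⟩
    · intro h
      have := congrFun h 0
      simp at this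
    · funext i
      fin_cases i <;>
        simp only [Matrix.mulVec, dotProduct, Fin.sum_univ_two, Matrix.cons_val',
          Matrix.cons_val_zero, Matrix.cons_val_one, Matrix.head_cons, Matrix.head_fin_const,
          Matrix.empty_val', Matrix.cons_val_fin_one, Pi.smul_apply, smul_eq_mul, Fin.isValue,
          Matrix.of_apply, Fin.mk_zero, Fin.mk_one]
      · ring
      · linear_combination -key
  · refine ⟨![5, 1 - Complex.I * Real.sqrt (3 / 2)], ?_, ?_⟩
    · intro h
      have := congrFun h 0
      simp at this
    · funext i
      fin_cases i <;>
        simp only [Matrix.mulVec, dotProduct, Fin.sum_univ_two, Matrix.cons_val',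
          Matrix.cons_val_zero, Matrix.cons_val_one, Matrix.head_cons, Matrix.head_fin_const,
          Matrix.empty_val', Matrix.cons_val_fin_one, Pi.smul_apply, smul_eq_mul, Fin.isValue,
          Matrix.of_apply, Fin.mk_zero, Fin.mk_one]
      · ring
      · linear_combination -key
  · intro h1 h2
    have hs : Real.sqrt 10 ^ 2 = 10 := Real.sq_sqrt (by norm_num)
    nlinarith [hs, Real.sqrt_nonneg 10,
      mul_pos (sub_pos.mpr h2) (show (0:ℝ) < 11 * Real.sqrt 10 / 20 + a₂ by positivity)]
end

section
/- Define the polynomials f(x, y) = (25√6/128)x²y + (11/32)x² − (11√6/64)xy and g(x, y) = −(√6/128)x³ − (3/128)y³ + (27/64)x²y + (√6/256)xy² − (5√6/96)x² + (5/32)xy. With all partial derivatives evaluated at the origin (so f_xx = 11/16, f_xy = −11√6/64, g_xx = −5√6/48, g_xy = 5/32, g_xxy = 27/32, g_yyy = −9/64) and ω = √6/8, the first Lyapunov quantity a = (1/16)(g_xxy + g_yyy) + (1/(16ω))(f_xx·f_xy − g_xx·g_xy − f_xx·g_xx) equals 59/2048, which is positive. -/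
lemma deriv_cubic (a b c d : ℝ) :
    deriv (fun x : ℝ => a*x^3 + b*x^2 + c*x + d) = fun x => 3*a*x^2 + 2*b*x + c := by
  funext x
  have h : HasDerivAt (fun x : ℝ => a*x^3 + b*x^2 + c*x + d) (3*a*x^2 + 2*b*x + c) x := by
    have := ((((hasDerivAt_pow 3 x).const_mul a).add
      ((hasDerivAt_pow 2 x).const_mul b)).add
      (((hasDerivAt_id x).const_mul c).add (hasDerivAt_const x d)))
    convert this using 1
    · rfl
    · rfl
    · funext t; simp [id]; ring
    · norm_num; ring
  exact h.deriv

lemma deriv2_cubic (a b c d : ℝ) :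
    deriv (deriv (fun x : ℝ => a*x^3 + b*x^2 + c*x + d)) = fun x => 6*a*x + 2*b := by
  rw [deriv_cubic]
  have h : (fun x : ℝ => 3*a*x^2 + 2*b*x + c)
      = fun x : ℝ => 0*x^3 + (3*a)*x^2 + (2*b)*x + c := by funext x; ring
  rw [h, deriv_cubic]; funext x; ring

lemma deriv3_cubic (a b c d : ℝ) :
    deriv (deriv (deriv (fun x : ℝ => a*x^3 + b*x^2 + c*x + d))) = fun _ => 6*a := by
  rw [deriv2_cubic]
  have h : (fun x : ℝ => 6*a*x + 2*b)
      = fun x : ℝ => 0*x^3 + 0*x^2 + (6*a)*x + (2*b) := by funext x; ring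
  rw [h, deriv_cubic]; funext x; ring

/-- First Lyapunov quantity for the Hill-regularized system (second example): for the
canonical-form nonlinearities `f(x,y) = (25√6/128)x²y + (11/32)x² − (11√6/64)xy` and
`g(x,y) = −(√6/128)x³ − (3/128)y³ + (27/64)x²y + (√6/256)xy² − (5√6/96)x² + (5/32)xy`,
the partial derivatives at the origin are `f_xx = 11/16`, `f_xy = −11√6/64`,
`g_xx = −5√6/48`, `g_xy = 5/32`, `g_xxy = 27/32`, `g_yyy = −9/64`, and with
`ω = √6/8` the quantity
`a = (1/16)(g_xxy + g_yyy) + (1/(16ω))(f_xx f_xy − g_xx g_xy − f_xx g_xx)`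
equals `59/2048 > 0` (subcritical Hopf bifurcation). -/
theorem hill_example2_lyapunov_quantity (f g : ℝ → ℝ → ℝ)
    (hf : ∀ x y : ℝ, f x y = (25 * Real.sqrt 6 / 128) * x ^ 2 * y
        + (11 / 32) * x ^ 2 - (11 * Real.sqrt 6 / 64) * x * y)
    (hg : ∀ x y : ℝ, g x y = -(Real.sqrt 6 / 128) * x ^ 3 - (3 / 128) * y ^ 3
        + (27 / 64) * x ^ 2 * y + (Real.sqrt 6 / 256) * x * y ^ 2
        - (5 * Real.sqrt 6 / 96) * x ^ 2 + (5 / 32) * x * y) :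
    deriv (deriv (fun x : ℝ => f x 0)) 0 = 11 / 16 ∧
    deriv (fun y : ℝ => deriv (fun x : ℝ => f x y) 0) 0 = -(11 * Real.sqrt 6 / 64) ∧
    deriv (deriv (fun x : ℝ => g x 0)) 0 = -(5 * Real.sqrt 6 / 48) ∧
    deriv (fun y : ℝ => deriv (fun x : ℝ => g x y) 0) 0 = 5 / 32 ∧
    deriv (fun y : ℝ => deriv (deriv (fun x : ℝ => g x y)) 0) 0 = 27 / 32 ∧
    deriv (deriv (deriv (fun y : ℝ => g 0 y))) 0 = -(9 / 64) ∧
    (1 / 16) * ((27 / 32) + -(9 / 64))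
      + (1 / (16 * (Real.sqrt 6 / 8))) * ((11 / 16) * (-(11 * Real.sqrt 6 / 64))
          - (-(5 * Real.sqrt 6 / 48)) * (5 / 32)
          - (11 / 16) * (-(5 * Real.sqrt 6 / 48)))
      = 59 / 2048 ∧
    (0 : ℝ) < 59 / 2048 := by
  have hfx : ∀ y : ℝ, (fun x : ℝ => f x y)
      = fun x : ℝ => 0*x^3 + ((25 * Real.sqrt 6 / 128)*y + 11/32)*x^2
        + (-(11 * Real.sqrt 6 / 64)*y)*x + 0 := by
    intro y; funext x; rw [hf]; ring
  have hgx : ∀ y : ℝ, (fun x : ℝ => g x y)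
      = fun x : ℝ => (-(Real.sqrt 6 / 128))*x^3
        + ((27/64)*y - 5 * Real.sqrt 6 / 96)*x^2
        + ((Real.sqrt 6 / 256)*y^2 + (5/32)*y)*x + (-(3/128)*y^3) := by
    intro y; funext x; rw [hg]; ring
  refine ⟨?_, ?_, ?_, ?_, ?_, ?_, ?_, by norm_num⟩
  · rw [hfx 0, deriv2_cubic]; norm_num
  · have h2 : (fun y : ℝ => deriv (fun x : ℝ => f x y) 0)
        = fun y : ℝ => 0*y^3 + 0*y^2 + (-(11 * Real.sqrt 6 / 64))*y + 0 := by
      funext y; rw [hfx y, deriv_cubic]; ring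
    rw [h2, deriv_cubic]; norm_num
  · rw [hgx 0, deriv2_cubic]; norm_num; ring
  · have h4 : (fun y : ℝ => deriv (fun x : ℝ => g x y) 0)
        = fun y : ℝ => 0*y^3 + (Real.sqrt 6 / 256)*y^2 + (5/32)*y + 0 := by
      funext y; rw [hgx y, deriv_cubic]; ring
    rw [h4, deriv_cubic]; norm_num
  · have h5 : (fun y : ℝ => deriv (deriv (fun x : ℝ => g x y)) 0)
        = fun y : ℝ => 0*y^3 + 0*y^2 + (27/32)*y + (-(5 * Real.sqrt 6 / 48)) := by
      funext y; rw [hgx y, deriv2_cubic]; ring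
    rw [h5, deriv_cubic]; norm_num
  · have h6 : (fun y : ℝ => g 0 y)
        = fun y : ℝ => (-(3/128))*y^3 + 0*y^2 + 0*y + 0 := by
      funext y; rw [hg]; ring
    rw [h6, deriv3_cubic]; norm_num
  · have hs : Real.sqrt 6 ^ 2 = 6 := Real.sq_sqrt (by norm_num)
    have hp : (0:ℝ) < Real.sqrt 6 := Real.sqrt_pos.mpr (by norm_num)
    field_simp
    nlinarith [hs, hp]
end
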